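/- Let H be a real Hilbert space, let f : H → ℝ ∪ {+∞} be a proper lower semicontinuous convex function (f ∈ Γ₀(H)), and let ε > 0. Then the Moreau envelope ^εf is Fréchet differentiable at every point: for every x ∈ H there exists ∇^εf(x) ∈ H such that ^εf(x + h) = ^εf(x) + ⟨∇^εf(x), h⟩ + o(‖h‖) as h → 0 in H. -/

import Mathlib

noncomputable section
open Filter Topology Pointwise

variable {H : Type*} [NormedAddCommGroup H] [InnerProductSpace ℝ H] [CompleteSpace H]

/-- An extended-real-valued function `f : H → ℝ ∪ {+∞}` (i.e. never `-∞`) is *proper*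
if it is finite at at least one point. -/
def EProper (f : H → EReal) : Prop := (∀ x, f x ≠ ⊥) ∧ (∃ x, f x ≠ ⊤)

/-- The infimal convolution `(f □ g)(x) = ⨅_{y} (f y + g (x - y))`. -/
def infConv (f g : H → EReal) (x : H) : EReal := ⨅ y : H, f y + g (x - y)

/-- The convex conjugate `f*(φ) = ⨆_{x} (⟨φ, x⟩ - f x)`. -/
def conj (f : H → EReal) (φ : H) : EReal := ⨆ x : H, ((inner ℝ φ x : ℝ) : EReal) - f x

/-- Convexity of an extended-real-valued function (extended-real arithmetic). -/
def EConvexOn (f : H → EReal) : Prop :=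
  ∀ x y : H, ∀ t : ℝ, 0 < t → t < 1 →
    f (t • x + (1 - t) • y) ≤ (t : EReal) * f x + ((1 - t : ℝ) : EReal) * f y

/-- Strict convexity: strict inequality whenever `x ≠ y` and both values are finite. -/
def EStrictConvexOn (f : H → EReal) : Prop :=
  ∀ x y : H, x ≠ y → f x ≠ ⊤ → f y ≠ ⊤ → ∀ t : ℝ, 0 < t → t < 1 →
    f (t • x + (1 - t) • y) < (t : EReal) * f x + ((1 - t : ℝ) : EReal) * f y

/-- `f` is coercive: `f x → +∞` as `‖x‖ → +∞`. -/
def ECoercive (f : H → EReal) : Prop :=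
  ∀ M : ℝ, ∃ R : ℝ, ∀ x : H, R ≤ ‖x‖ → (M : EReal) ≤ f x

/-- `f` is supercoercive: `f x / ‖x‖ → +∞` as `‖x‖ → +∞`. -/
def ESupercoercive (f : H → EReal) : Prop :=
  ∀ M : ℝ, ∃ R : ℝ, ∀ x : H, R ≤ ‖x‖ → ((M * ‖x‖ : ℝ) : EReal) ≤ f x

/-- The Moreau envelope `ᵉf(x) = ⨅_{y} (f y + ‖x - y‖² / (2ε))`. -/
def moreau (ε : ℝ) (f : H → EReal) (x : H) : EReal :=
  ⨅ y : H, f y + ((‖x - y‖ ^ 2 / (2 * ε) : ℝ) : EReal)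

/-- `p` is a minimizer of `y ↦ f y + ‖x - y‖²/(2ε)`, i.e. a proximal point of `f` at `x`. -/
def IsProx (ε : ℝ) (f : H → EReal) (x p : H) : Prop :=
  ∀ y : H, f p + ((‖x - p‖ ^ 2 / (2 * ε) : ℝ) : EReal)
    ≤ f y + ((‖x - y‖ ^ 2 / (2 * ε) : ℝ) : EReal)

/-- The subdifferential `∂f(p) = {φ : f p finite and ∀ y, f y ≥ f p + ⟨φ, y - p⟩}`. -/
def subdiff (f : H → EReal) (p : H) : Set H :=
  {φ : H | f p ≠ ⊤ ∧ ∀ y : H, f p + ((inner ℝ φ (y - p) : ℝ) : EReal) ≤ f y}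



theorem exists_affine_minorant (f : H → EReal) (hf₀ : EProper f) (hf₁ : LowerSemicontinuous f)
    (hf₂ : EConvexOn f) :
    ∃ c β : ℝ, 0 ≤ β ∧ ∀ y : H, ((c - β * ‖y‖ : ℝ) : EReal) ≤ f y := by
  obtain ⟨hbot, x₀, hx₀⟩ := hf₀
  set S : Set (H × ℝ) := {p | f p.1 ≤ (p.2 : EReal)} with hS
  have hSconv : Convex ℝ S := by
    rintro ⟨y, s⟩ hy ⟨z, t⟩ hz a b ha hb hab
    rcases eq_or_lt_of_le ha with h0 | ha'
    · have hb1 : b = 1 := by linarith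
      simpa [← h0, hb1] using hz
    rcases eq_or_lt_of_le hb with h0 | hb'
    · have ha1 : a = 1 := by linarith
      simpa [← h0, ha1] using hy
    have hyT : f y ≠ ⊤ := (lt_of_le_of_lt hy (EReal.coe_lt_top s)).ne
    have hzT : f z ≠ ⊤ := (lt_of_le_of_lt hz (EReal.coe_lt_top t)).ne
    have hy' : (f y).toReal ≤ s := by
      simpa using EReal.toReal_le_toReal hy (hbot y) (EReal.coe_ne_top s)
    have hz' : (f z).toReal ≤ t := by
      simpa using EReal.toReal_le_toReal hz (hbot z) (EReal.coe_ne_top t)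
    have ha1 : a < 1 := by linarith
    have hconv := hf₂ y z a ha' ha1
    have hba : (1 - a) = b := by linarith
    simp only [hS, Set.mem_setOf_eq, Prod.smul_mk, Prod.mk_add_mk, smul_eq_mul]
    calc f (a • y + b • z) = f (a • y + (1-a) • z) := by rw [hba]
      _ ≤ (a : EReal) * f y + ((1 - a : ℝ) : EReal) * f z := hconv
      _ = ((a * (f y).toReal + (1-a) * (f z).toReal : ℝ) : EReal) := by
          rw [← EReal.coe_toReal hyT (hbot y), ← EReal.coe_toReal hzT (hbot z)]
          norm_cast
      _ ≤ ((a * s + b * t : ℝ) : EReal) := by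
          rw [EReal.coe_le_coe_iff, hba]
          gcongr
  have hSclosed : IsClosed S := by
    rw [← isOpen_compl_iff, isOpen_iff_mem_nhds]
    rintro ⟨y, s⟩ hp
    have hlt : (s : EReal) < f y := not_le.1 hp
    obtain ⟨q, hq1, hq2⟩ := exists_between hlt
    have hqT : q ≠ ⊤ := (hq2.trans_le le_top).ne
    have hqB : q ≠ ⊥ := (bot_le.trans_lt hq1).ne'
    have hqeq : ((q.toReal : ℝ) : EReal) = q := EReal.coe_toReal hqT hqB
    have h1 : ∀ᶠ y' in 𝓝 y, q < f y' := hf₁ y q hq2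
    have hsq : s < q.toReal := by
      rw [← EReal.coe_lt_coe_iff, hqeq]; exact hq1
    have h2 : ∀ᶠ s' : ℝ in 𝓝 s, s' < q.toReal := eventually_lt_nhds hsq
    rw [nhds_prod_eq]
    filter_upwards [h1.prod_mk h2] with p hp'
    simp only [hS, Set.mem_compl_iff, Set.mem_setOf_eq, not_le]
    calc (p.2 : EReal) < (q.toReal : EReal) := by exact_mod_cast hp'.2
      _ = q := hqeq
      _ < f p.1 := hp'.1
  set r₀ : ℝ := (f x₀).toReal with hr₀
  have hx₀eq : ((r₀ : ℝ) : EReal) = f x₀ := EReal.coe_toReal hx₀ (hbot x₀)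
  have hptS : ((x₀, r₀ - 1) : H × ℝ) ∉ S := by
    simp only [hS, Set.mem_setOf_eq, not_le, ← hx₀eq]
    exact_mod_cast sub_one_lt r₀
  obtain ⟨φ, u, hu1, hu2⟩ := geometric_hahn_banach_point_closed hSconv hSclosed hptS
  set b : ℝ := φ (0, 1) with hb
  set L : H → ℝ := fun y => φ (y, 0) with hL
  have hdecomp : ∀ (y : H) (t : ℝ), φ (y, t) = L y + t * b := by
    intro y t
    have : ((y, t) : H × ℝ) = (y, 0) + t • ((0 : H), (1 : ℝ)) := by
      simp [Prod.ext_iff]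
    rw [this, map_add, map_smul, smul_eq_mul, hL, hb]
  have hx₀S : ((x₀, r₀) : H × ℝ) ∈ S := by
    simp only [hS, Set.mem_setOf_eq, hx₀eq]; exact le_refl _
  have hbpos : 0 < b := by
    have h1 := hu2 _ hx₀S
    rw [hdecomp] at hu1 h1
    nlinarith
  refine ⟨u / b, ‖φ‖ / b, by positivity, fun y => ?_⟩
  by_cases hyT : f y = ⊤
  · rw [hyT]; exact le_top
  have hyS : ((y, (f y).toReal) : H × ℝ) ∈ S := by
    simp only [hS, Set.mem_setOf_eq, EReal.coe_toReal hyT (hbot y)]; exact le_refl _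
  have h1 := hu2 _ hyS
  rw [hdecomp] at h1
  have hLy : |L y| ≤ ‖φ‖ * ‖y‖ := by
    have := φ.le_opNorm (y, 0)
    have hn : ‖((y, 0) : H × ℝ)‖ = ‖y‖ := by simp [Prod.norm_def]
    rw [hn] at this
    calc |L y| = ‖φ (y, 0)‖ := by rw [hL]; simp [Real.norm_eq_abs]
      _ ≤ ‖φ‖ * ‖y‖ := this
  have hkey : u / b - ‖φ‖ / b * ‖y‖ ≤ (f y).toReal := by
    have h2 : u - ‖φ‖ * ‖y‖ ≤ (f y).toReal * b := by
      have := (abs_le.1 hLy).2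
      linarith
    have h3 : u / b - ‖φ‖ / b * ‖y‖ = (u - ‖φ‖ * ‖y‖) / b := by ring
    rw [h3, div_le_iff₀ hbpos]
    linarith
  calc ((u / b - ‖φ‖ / b * ‖y‖ : ℝ) : EReal) ≤ (((f y).toReal : ℝ) : EReal) := by
        exact_mod_cast hkey
    _ = f y := EReal.coe_toReal hyT (hbot y)

theorem obj_lb (c β : ℝ) (hβ : 0 ≤ β) (ε : ℝ) (hε : 0 < ε) (x y : H) :
    c - ‖x‖^2/(2*ε) - β^2*ε ≤ c - β*‖y‖ + ‖x-y‖^2/(2*ε) := by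
  have htri : ‖y‖ ≤ ‖x‖ + ‖x - y‖ := by
    calc ‖y‖ = ‖x - (x - y)‖ := by rw [sub_sub_cancel]
      _ ≤ ‖x‖ + ‖x - y‖ := norm_sub_le _ _
  rw [← sub_nonneg]
  have hrw : (c - β*‖y‖ + ‖x-y‖^2/(2*ε)) - (c - ‖x‖^2/(2*ε) - β^2*ε)
      = (2*‖x-y‖^2 + 2*‖x‖^2 - 4*ε*β*‖y‖ + 4*β^2*ε^2) / (4*ε) := by
    field_simp; ring
  rw [hrw]
  apply div_nonneg _ (by linarith)
  nlinarith [sq_nonneg (‖y‖ - 2*β*ε), sq_nonneg (‖x‖ - ‖x-y‖), htri, norm_nonneg y,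
    norm_nonneg x, norm_nonneg (x-y)]

theorem moreau_lb (f : H → EReal) (c β : ℝ) (hβ : 0 ≤ β)
    (hmin : ∀ y : H, ((c - β * ‖y‖ : ℝ) : EReal) ≤ f y) (ε : ℝ) (hε : 0 < ε) (x : H) :
    ((c - ‖x‖^2/(2*ε) - β^2*ε : ℝ) : EReal) ≤ moreau ε f x := by
  refine le_iInf fun y => ?_
  calc ((c - ‖x‖^2/(2*ε) - β^2*ε : ℝ) : EReal)
      ≤ ((c - β*‖y‖ + ‖x-y‖^2/(2*ε) : ℝ) : EReal) := by
        exact_mod_cast obj_lb c β hβ ε hε x y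
    _ = ((c - β*‖y‖ : ℝ) : EReal) + ((‖x-y‖^2/(2*ε) : ℝ) : EReal) := by norm_cast
    _ ≤ f y + ((‖x-y‖^2/(2*ε) : ℝ) : EReal) := add_le_add_left (hmin y) _

theorem moreau_ne_top (f : H → EReal) (x₀ : H) (hx₀ : f x₀ ≠ ⊤) (ε : ℝ) (x : H) :
    moreau ε f x ≠ ⊤ := by
  have h : moreau ε f x ≤ f x₀ + ((‖x - x₀‖ ^ 2 / (2 * ε) : ℝ) : EReal) :=
    iInf_le _ x₀
  exact ne_top_of_le_ne_top (EReal.add_lt_top hx₀ (EReal.coe_ne_top _)).ne h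

theorem exists_prox (f : H → EReal) (hbot : ∀ z, f z ≠ ⊥) (hf₁ : LowerSemicontinuous f)
    (hf₂ : EConvexOn f) (ε : ℝ) (hε : 0 < ε) (x : H)
    (hmt : moreau ε f x ≠ ⊤) (hmb : moreau ε f x ≠ ⊥) :
    ∃ p : H, f p ≠ ⊤ ∧ IsProx ε f x p ∧
      moreau ε f x = f p + ((‖x - p‖ ^ 2 / (2 * ε) : ℝ) : EReal) := by
  set m : EReal := moreau ε f x with hmdef
  set mr : ℝ := m.toReal with hmr
  have hm : m = ((mr : ℝ) : EReal) := (EReal.coe_toReal hmt hmb).symm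
  have hgm : ∀ y : H, m ≤ f y + ((‖x - y‖ ^ 2 / (2 * ε) : ℝ) : EReal) := fun y => iInf_le _ y
  -- midpoint (strong convexity) inequality
  have key_mid : ∀ y z : H, f y ≠ ⊤ → f z ≠ ⊤ →
      mr + ‖y - z‖ ^ 2 / (8 * ε) ≤
        ((f y).toReal + ‖x - y‖ ^ 2 / (2 * ε) + ((f z).toReal + ‖x - z‖ ^ 2 / (2 * ε))) / 2 := by
    intro y z hyT hzT
    set A : ℝ := (f y).toReal
    set B : ℝ := (f z).toReal
    set w : H := (2⁻¹ : ℝ) • y + (2⁻¹ : ℝ) • z with hw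
    have hconv := hf₂ y z (2⁻¹) (by norm_num) (by norm_num)
    have h12 : (1 - 2⁻¹ : ℝ) = 2⁻¹ := by norm_num
    rw [h12] at hconv
    have hconv' : f w ≤ ((2⁻¹ * A + 2⁻¹ * B : ℝ) : EReal) := by
      rw [hw]
      calc f ((2⁻¹ : ℝ) • y + (2⁻¹ : ℝ) • z)
          ≤ ((2⁻¹ : ℝ) : EReal) * f y + ((2⁻¹ : ℝ) : EReal) * f z := hconv
        _ = ((2⁻¹ * A + 2⁻¹ * B : ℝ) : EReal) := by
            rw [← EReal.coe_toReal hyT (hbot y), ← EReal.coe_toReal hzT (hbot z)]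
            norm_cast
    have hwT : f w ≠ ⊤ := ne_top_of_le_ne_top (EReal.coe_ne_top _) hconv'
    have hwr : (f w).toReal ≤ 2⁻¹ * A + 2⁻¹ * B := by
      have := EReal.toReal_le_toReal hconv' (hbot w) (EReal.coe_ne_top _)
      rwa [EReal.toReal_coe] at this
    have h1 : m ≤ f w + ((‖x - w‖ ^ 2 / (2 * ε) : ℝ) : EReal) := hgm w
    have h1' : mr ≤ (f w).toReal + ‖x - w‖ ^ 2 / (2 * ε) := by
      have := EReal.toReal_le_toReal h1 hmb
        (EReal.add_lt_top hwT (EReal.coe_ne_top _)).ne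
      rwa [EReal.toReal_add hwT (hbot w) (EReal.coe_ne_top _) (EReal.coe_ne_bot _),
        EReal.toReal_coe] at this
    -- parallelogram computation
    have h3 : (2 : ℝ) • (x - w) = (x - y) + (x - z) := by
      rw [hw]; module
    have h4 := norm_add_sq_real (x - y) (x - z)
    have h5 := norm_sub_sq_real (x - y) (x - z)
    have h6 : (x - y) - (x - z) = z - y := by abel
    rw [h6, norm_sub_rev] at h5
    have h8 : ‖(2 : ℝ) • (x - w)‖ ^ 2 = 4 * ‖x - w‖ ^ 2 := by
      rw [norm_smul]; norm_num; ring
    rw [h3] at h8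
    have hquad : 4 * ‖x - w‖ ^ 2 = 2 * ‖x - y‖ ^ 2 + 2 * ‖x - z‖ ^ 2 - ‖y - z‖ ^ 2 := by
      nlinarith [h4, h5, h8]
    have hq : ‖x - w‖ ^ 2 / (2 * ε) =
        ‖x - y‖ ^ 2 / (4 * ε) + ‖x - z‖ ^ 2 / (4 * ε) - ‖y - z‖ ^ 2 / (8 * ε) := by
      have hw2 : ‖x - w‖ ^ 2 = (2 * ‖x - y‖ ^ 2 + 2 * ‖x - z‖ ^ 2 - ‖y - z‖ ^ 2) / 4 := by
        linarith
      rw [hw2]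
      field_simp
      ring
    have hay : ‖x - y‖ ^ 2 / (2 * ε) = 2 * (‖x - y‖ ^ 2 / (4 * ε)) := by
      field_simp; ring
    have haz : ‖x - z‖ ^ 2 / (2 * ε) = 2 * (‖x - z‖ ^ 2 / (4 * ε)) := by
      field_simp; ring
    rw [hay, haz]
    linarith [h1', hwr, hq]
  -- minimizing sequence
  have hseq : ∀ n : ℕ, ∃ y : H,
      f y + ((‖x - y‖ ^ 2 / (2 * ε) : ℝ) : EReal) < ((mr + 1 / (n + 1) : ℝ) : EReal) := by
    intro n
    have hlt : m < ((mr + 1 / (n + 1) : ℝ) : EReal) := by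
      rw [hm]
      exact_mod_cast lt_add_of_pos_right mr (by positivity)
    exact iInf_lt_iff.1 hlt
  choose y hy using hseq
  have hyT : ∀ n, f (y n) ≠ ⊤ := by
    intro n hT
    have := hy n
    rw [hT, EReal.top_add_of_ne_bot (EReal.coe_ne_bot _)] at this
    exact (not_top_lt this)
  set r : ℕ → ℝ := fun n => (f (y n)).toReal + ‖x - y n‖ ^ 2 / (2 * ε) with hrdef
  have hgyr : ∀ n, f (y n) + ((‖x - y n‖ ^ 2 / (2 * ε) : ℝ) : EReal) = ((r n : ℝ) : EReal) := by
    intro n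
    rw [hrdef]
    rw [← EReal.coe_toReal (hyT n) (hbot (y n))]
    norm_cast
  have hr_lt : ∀ n, r n < mr + 1 / (n + 1) := by
    intro n
    have := hy n
    rw [hgyr n, EReal.coe_lt_coe_iff] at this
    exact this
  have hr_ge : ∀ n, mr ≤ r n := by
    intro n
    have := hgm (y n)
    rw [hgyr n, hm, EReal.coe_le_coe_iff] at this
    exact this
  -- Cauchy
  have hcauchy_bd : ∀ n k : ℕ, ‖y n - y k‖ ^ 2 ≤ 4 * ε * (1 / (n + 1) + 1 / (k + 1)) := by
    intro n k
    have h1 := key_mid (y n) (y k) (hyT n) (hyT k)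
    have h2 : mr + ‖y n - y k‖ ^ 2 / (8 * ε) ≤ (r n + r k) / 2 := h1
    have h3 : (r n + r k) / 2 < mr + (1 / (n + 1) + 1 / (k + 1)) / 2 := by
      have := hr_lt n; have := hr_lt k; linarith
    have h4 : ‖y n - y k‖ ^ 2 / (8 * ε) ≤ (1 / (n + 1) + 1 / (k + 1)) / 2 := by linarith
    rw [div_le_iff₀ (by linarith : (0:ℝ) < 8 * ε)] at h4
    linarith
  have hcauchy : CauchySeq y := by
    apply cauchySeq_of_le_tendsto_0 (fun n : ℕ => Real.sqrt (8 * ε * (1 / (n + 1))))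
    · intro n k N hn hk
      rw [dist_eq_norm]
      apply Real.le_sqrt_of_sq_le
      have hmono : ∀ j : ℕ, N ≤ j → (1 : ℝ) / (j + 1) ≤ 1 / (N + 1) := by
        intro j hj
        apply one_div_le_one_div_of_le (by positivity)
        have : (N : ℝ) ≤ j := Nat.cast_le.2 hj
        linarith
      have := hcauchy_bd n k
      have h1 := hmono n hn
      have h2 := hmono k hk
      nlinarith [hε]
    · have h1 : Tendsto (fun n : ℕ => 8 * ε * (1 / (n + 1) : ℝ)) atTop (𝓝 0) := by
        have := tendsto_one_div_add_atTop_nhds_zero_nat.const_mul (8 * ε)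
        simpa using this
      have := (Real.continuous_sqrt.tendsto 0).comp h1
      simpa [Function.comp_def] using this
  obtain ⟨p, hp⟩ := cauchySeq_tendsto_of_complete hcauchy
  -- lower semicontinuity: g p ≤ m
  have hgp : f p + ((‖x - p‖ ^ 2 / (2 * ε) : ℝ) : EReal) ≤ m := by
    by_contra hcon
    push_neg at hcon
    obtain ⟨cc, hc1, hc2⟩ := exists_between hcon
    have hccT : cc ≠ ⊤ := hc2.ne_top
    have hccB : cc ≠ ⊥ := (hm ▸ hc1 : ((mr:ℝ):EReal) < cc).ne_bot
    set cr : ℝ := cc.toReal with hcr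
    have hcc : ((cr : ℝ) : EReal) = cc := EReal.coe_toReal hccT hccB
    set qp : ℝ := ‖x - p‖ ^ 2 / (2 * ε) with hqp
    have hfp : ((cr - qp : ℝ) : EReal) < f p := by
      by_cases hpT : f p = ⊤
      · rw [hpT]; exact EReal.coe_lt_top _
      · have h0 : ((cr : ℝ) : EReal) < (((f p).toReal + qp : ℝ) : EReal) := by
          rw [hcc]
          calc cc < f p + ((qp : ℝ) : EReal) := hc2
            _ = (((f p).toReal + qp : ℝ) : EReal) := by
                rw [← EReal.coe_toReal hpT (hbot p)]; norm_cast
        rw [EReal.coe_lt_coe_iff] at h0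
        rw [← EReal.coe_toReal hpT (hbot p), EReal.coe_lt_coe_iff]
        linarith
    obtain ⟨c'', hc''1, hc''2⟩ := exists_between hfp
    have hc''T : c'' ≠ ⊤ := hc''2.ne_top
    have hc''B : c'' ≠ ⊥ := hc''1.ne_bot
    set c' : ℝ := c''.toReal with hc'def
    have hc'eq : ((c' : ℝ) : EReal) = c'' := EReal.coe_toReal hc''T hc''B
    have hδ : cr - qp < c' := by rw [← EReal.coe_lt_coe_iff, hc'eq]; exact hc''1
    have hev1 : ∀ᶠ z in 𝓝 p, ((c' : ℝ) : EReal) < f z := hf₁ p _ (hc'eq ▸ hc''2)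
    have hcont : Continuous fun z : H => ‖x - z‖ ^ 2 / (2 * ε) := by fun_prop
    have hev2 : ∀ᶠ z in 𝓝 p, cr - c' < ‖x - z‖ ^ 2 / (2 * ε) :=
      (hcont.tendsto p).eventually (eventually_gt_nhds (by rw [← hqp]; linarith))
    have hev : ∀ᶠ z in 𝓝 p, cc < f z + ((‖x - z‖ ^ 2 / (2 * ε) : ℝ) : EReal) := by
      filter_upwards [hev1, hev2] with z h1 h2
      calc cc = ((c' + (cr - c') : ℝ) : EReal) := by rw [← hcc]; norm_num
        _ = ((c' : ℝ) : EReal) + ((cr - c' : ℝ) : EReal) := by norm_cast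
        _ < f z + ((‖x - z‖ ^ 2 / (2 * ε) : ℝ) : EReal) :=
            EReal.add_lt_add h1 (by exact_mod_cast h2)
    have hev_seq : ∀ᶠ n in atTop,
        cc < f (y n) + ((‖x - y n‖ ^ 2 / (2 * ε) : ℝ) : EReal) := hp.eventually hev
    have hsmall : ∀ᶠ n in atTop,
        f (y n) + ((‖x - y n‖ ^ 2 / (2 * ε) : ℝ) : EReal) < cc := by
      have hcrm : mr < cr := by rw [← EReal.coe_lt_coe_iff, hcc, ← hm]; exact hc1
      have hev3 : ∀ᶠ n : ℕ in atTop, (1 : ℝ) / (n + 1) < cr - mr :=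
        tendsto_one_div_add_atTop_nhds_zero_nat.eventually
          (eventually_lt_nhds (by linarith))
      filter_upwards [hev3] with n hn
      rw [hgyr n, ← hcc, EReal.coe_lt_coe_iff]
      have h5 := hr_lt n
      calc r n < mr + 1 / ((n : ℝ) + 1) := h5
        _ < mr + (cr - mr) := add_lt_add_right hn mr
        _ = cr := by ring
    obtain ⟨n, h1, h2⟩ := (hev_seq.and hsmall).exists
    exact lt_irrefl _ (h1.trans h2)
  refine ⟨p, ?_, ?_, ?_⟩
  · intro hT
    rw [hT, EReal.top_add_of_ne_bot (EReal.coe_ne_bot _)] at hgp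
    exact hmt (top_le_iff.1 hgp)
  · intro z
    exact le_trans hgp (hgm z)
  · exact le_antisymm (hgm p) hgp

theorem prox_subgrad (f : H → EReal) (hbot : ∀ z, f z ≠ ⊥) (hf₂ : EConvexOn f)
    (ε : ℝ) (hε : 0 < ε) (x p : H) (hpT : f p ≠ ⊤) (hprox : IsProx ε f x p)
    (y : H) (hyT : f y ≠ ⊤) :
    (f p).toReal + (inner ℝ (x - p) (y - p) : ℝ) / ε ≤ (f y).toReal := by
  set A : ℝ := (f p).toReal with hA
  set B : ℝ := (f y).toReal with hB
  set I : ℝ := (inner ℝ (x - p) (y - p) : ℝ) with hI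
  set N : ℝ := ‖y - p‖ ^ 2 with hN
  clear_value A B I N
  have key : ∀ t : ℝ, 0 < t → t < 1 → A + I / ε - t * (N / (2 * ε)) ≤ B := by
    intro t ht0 ht1
    set w : H := t • y + (1 - t) • p with hw
    have hconv := hf₂ y p t ht0 ht1
    have hconv' : f w ≤ ((t * B + (1 - t) * A : ℝ) : EReal) := by
      rw [hw]
      calc f (t • y + (1 - t) • p)
          ≤ (t : EReal) * f y + ((1 - t : ℝ) : EReal) * f p := hconv
        _ = ((t * B + (1 - t) * A : ℝ) : EReal) := by
            rw [hB, hA, ← EReal.coe_toReal hyT (hbot y), ← EReal.coe_toReal hpT (hbot p)]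
            norm_cast
    have hwT : f w ≠ ⊤ := ne_top_of_le_ne_top (EReal.coe_ne_top _) hconv'
    have hwr : (f w).toReal ≤ t * B + (1 - t) * A := by
      have := EReal.toReal_le_toReal hconv' (hbot w) (EReal.coe_ne_top _)
      rwa [EReal.toReal_coe] at this
    have h1 := hprox w
    have h1' : A + ‖x - p‖ ^ 2 / (2 * ε) ≤ (f w).toReal + ‖x - w‖ ^ 2 / (2 * ε) := by
      have h2 : ((A + ‖x - p‖ ^ 2 / (2 * ε) : ℝ) : EReal)
          ≤ (((f w).toReal + ‖x - w‖ ^ 2 / (2 * ε) : ℝ) : EReal) := by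
        calc ((A + ‖x - p‖ ^ 2 / (2 * ε) : ℝ) : EReal)
            = f p + ((‖x - p‖ ^ 2 / (2 * ε) : ℝ) : EReal) := by
              rw [hA, ← EReal.coe_toReal hpT (hbot p)]; norm_cast
          _ ≤ f w + ((‖x - w‖ ^ 2 / (2 * ε) : ℝ) : EReal) := h1
          _ = (((f w).toReal + ‖x - w‖ ^ 2 / (2 * ε) : ℝ) : EReal) := by
              rw [← EReal.coe_toReal hwT (hbot w)]; norm_cast
      exact_mod_cast h2
    have hxw : x - w = (x - p) - t • (y - p) := by rw [hw]; module
    have hnw : ‖x - w‖ ^ 2 = ‖x - p‖ ^ 2 - 2 * t * I + t ^ 2 * N := by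
      rw [hxw, norm_sub_sq_real, real_inner_smul_right, norm_smul,
        Real.norm_eq_abs, abs_of_pos ht0, hI, hN]
      ring
    rw [hnw] at h1'
    have e1 : (‖x - p‖ ^ 2 - 2 * t * I + t ^ 2 * N) / (2 * ε)
        = ‖x - p‖ ^ 2 / (2 * ε) - t * (I / ε) + t ^ 2 * (N / (2 * ε)) := by
      field_simp
    rw [e1] at h1'
    have hT : 0 ≤ t * B - t * A - t * (I / ε) + t ^ 2 * (N / (2 * ε)) := by
      linarith [h1', hwr]
    nlinarith [hT, ht0]
  by_cases hNz : N = 0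
  · have h12 := key (1 / 2) (by norm_num) (by norm_num)
    rw [hNz] at h12
    norm_num at h12
    linarith
  · have hNpos : 0 < N := lt_of_le_of_ne (by rw [hN]; positivity) (Ne.symm hNz)
    by_contra hcon
    push_neg at hcon
    obtain ⟨D, hD⟩ : ∃ D : ℝ, D = A + I / ε - B := ⟨_, rfl⟩
    have hDpos : 0 < D := by rw [hD]; linarith
    obtain ⟨t, ht⟩ : ∃ t : ℝ, t = min (1 / 2) (ε * D / N) := ⟨_, rfl⟩
    have ht0 : 0 < t := by rw [ht]; exact lt_min (by norm_num) (by positivity)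
    have ht1 : t < 1 := by rw [ht]; exact lt_of_le_of_lt (min_le_left _ _) (by norm_num)
    have h1 := key t ht0 ht1
    have h2 : t ≤ ε * D / N := by rw [ht]; exact min_le_right _ _
    have h3 : t * (N / (2 * ε)) ≤ D / 2 := by
      calc t * (N / (2 * ε)) ≤ (ε * D / N) * (N / (2 * ε)) := by
            apply mul_le_mul_of_nonneg_right h2 (by positivity)
        _ = D / 2 := by field_simp
    rw [hD] at h3
    linarith [h1, h3]


theorem moreau_frechet_differentiable (f : H → EReal)
    (hf₀ : EProper f) (hf₁ : LowerSemicontinuous f) (hf₂ : EConvexOn f) (ε : ℝ) (hε : 0 < ε) :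
    (∀ x : H, moreau ε f x ≠ ⊤ ∧ moreau ε f x ≠ ⊥) ∧
    ∀ x : H, ∃ grad : H,
      HasFDerivAt (fun z : H => (moreau ε f z).toReal) (innerSL ℝ grad) x := by
  obtain ⟨c, β, hβ, hmin⟩ := exists_affine_minorant f hf₀ hf₁ hf₂
  obtain ⟨hbot, x₀, hx₀⟩ := hf₀
  have hfin : ∀ x : H, moreau ε f x ≠ ⊤ ∧ moreau ε f x ≠ ⊥ := by
    intro x
    refine ⟨moreau_ne_top f x₀ hx₀ ε x, ?_⟩
    have h1 := moreau_lb f c β hβ hmin ε hε x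
    intro hb
    rw [hb, le_bot_iff] at h1
    exact EReal.coe_ne_bot _ h1
  refine ⟨hfin, fun x => ?_⟩
  have hex : ∀ z : H, ∃ p, f p ≠ ⊤ ∧ IsProx ε f z p ∧
      moreau ε f z = f p + ((‖z - p‖ ^ 2 / (2 * ε) : ℝ) : EReal) := fun z =>
    exists_prox f hbot hf₁ hf₂ ε hε z (hfin z).1 (hfin z).2
  choose P hPT hPprox hPeq using hex
  -- real-valued envelope identities
  have hA : ∀ z : H, (moreau ε f z).toReal
      = (f (P z)).toReal + ‖z - P z‖ ^ 2 / (2 * ε) := by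
    intro z
    rw [hPeq z, EReal.toReal_add (hPT z) (hbot (P z)) (EReal.coe_ne_top _) (EReal.coe_ne_bot _),
      EReal.toReal_coe]
  have h_le : ∀ z w : H, (moreau ε f z).toReal
      ≤ (f (P w)).toReal + ‖z - P w‖ ^ 2 / (2 * ε) := by
    intro z w
    have h1 : moreau ε f z ≤ f (P w) + ((‖z - P w‖ ^ 2 / (2 * ε) : ℝ) : EReal) := iInf_le _ _
    have h2 := EReal.toReal_le_toReal h1 (hfin z).2
      (EReal.add_lt_top (hPT w) (EReal.coe_ne_top _)).ne
    rwa [EReal.toReal_add (hPT w) (hbot (P w)) (EReal.coe_ne_top _) (EReal.coe_ne_bot _),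
      EReal.toReal_coe] at h2
  -- firm nonexpansiveness of the prox map
  have hnonexp : ∀ z w : H, ‖P w - P z‖ ≤ ‖w - z‖ := by
    intro z w
    have h1 := prox_subgrad f hbot hf₂ ε hε z (P z) (hPT z) (hPprox z) (P w) (hPT w)
    have h2 := prox_subgrad f hbot hf₂ ε hε w (P w) (hPT w) (hPprox w) (P z) (hPT z)
    have h3 : (inner ℝ (z - P z) (P w - P z) : ℝ) + (inner ℝ (w - P w) (P z - P w) : ℝ) ≤ 0 := by
      have h4 : ((inner ℝ (z - P z) (P w - P z) : ℝ) + (inner ℝ (w - P w) (P z - P w) : ℝ)) / ε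
          ≤ 0 := by
        rw [add_div]; linarith
      have h5 := (div_le_iff₀ hε).1 h4
      linarith [h5]
    have e1 : (inner ℝ (w - P w) (P z - P w) : ℝ) = -(inner ℝ (w - P w) (P w - P z) : ℝ) := by
      rw [← inner_neg_right]
      congr 1
      abel
    have e2 : (inner ℝ (w - z) (P w - P z) : ℝ) - ‖P w - P z‖ ^ 2
        = (inner ℝ (w - P w) (P w - P z) : ℝ) - (inner ℝ (z - P z) (P w - P z) : ℝ) := by
      rw [← real_inner_self_eq_norm_sq, ← inner_sub_left, ← inner_sub_left]
      congr 1
      abel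
    have hsq : ‖P w - P z‖ ^ 2 ≤ (inner ℝ (w - z) (P w - P z) : ℝ) := by linarith [h3, e1, e2]
    have hb := real_inner_le_norm (w - z) (P w - P z)
    nlinarith [norm_nonneg (P w - P z), norm_nonneg (w - z)]
  -- the derivative
  refine ⟨(ε⁻¹ : ℝ) • (x - P x), ?_⟩
  rw [hasFDerivAt_iff_isLittleO_nhds_zero, Asymptotics.isLittleO_iff]
  intro cpos hcpos
  have hev : ∀ᶠ h : H in 𝓝 0, ‖h‖ < ε * cpos := by
    filter_upwards [Metric.ball_mem_nhds (0 : H) (show (0:ℝ) < ε * cpos by positivity)] with h hh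
    simpa [mem_ball_zero_iff] using hh
  filter_upwards [hev] with h hh
  have hip : (inner ℝ ((ε⁻¹ : ℝ) • (x - P x)) h : ℝ) = (inner ℝ (x - P x) h : ℝ) / ε := by
    rw [real_inner_smul_left]; ring
  -- upper bound
  have n1 : ‖x + h - P x‖ ^ 2 = ‖x - P x‖ ^ 2 + 2 * (inner ℝ (x - P x) h : ℝ) + ‖h‖ ^ 2 := by
    have : x + h - P x = (x - P x) + h := by abel
    rw [this, norm_add_sq_real]
  have hup : (moreau ε f (x + h)).toReal - (moreau ε f x).toReal
      - (inner ℝ (x - P x) h : ℝ) / ε ≤ ‖h‖ ^ 2 / (2 * ε) := by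
    have h1 := h_le (x + h) x
    have h2 := hA x
    rw [n1] at h1
    have e3 : (‖x - P x‖ ^ 2 + 2 * (inner ℝ (x - P x) h : ℝ) + ‖h‖ ^ 2) / (2 * ε)
        = ‖x - P x‖ ^ 2 / (2 * ε) + (inner ℝ (x - P x) h : ℝ) / ε + ‖h‖ ^ 2 / (2 * ε) := by
      field_simp
    rw [e3] at h1
    linarith
  -- lower bound
  have n2 : ‖x + h - P (x + h)‖ ^ 2
      = ‖x - P (x + h)‖ ^ 2 + 2 * (inner ℝ (x - P (x + h)) h : ℝ) + ‖h‖ ^ 2 := by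
    have : x + h - P (x + h) = (x - P (x + h)) + h := by abel
    rw [this, norm_add_sq_real]
  have hiq : (inner ℝ (x - P (x + h)) h : ℝ)
      = (inner ℝ (x - P x) h : ℝ) + (inner ℝ (P x - P (x + h)) h : ℝ) := by
    rw [← inner_add_left]
    congr 1
    abel
  have hpq : ‖P x - P (x + h)‖ ≤ ‖h‖ := by
    have := hnonexp x (x + h)
    rw [norm_sub_rev (P x)]
    simpa using this
  have hipq : -(‖h‖ ^ 2) ≤ (inner ℝ (P x - P (x + h)) h : ℝ) := by
    have h1 := abs_real_inner_le_norm (P x - P (x + h)) h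
    have h2 := (abs_le.1 h1).1
    have h3 : ‖P x - P (x + h)‖ * ‖h‖ ≤ ‖h‖ * ‖h‖ :=
      mul_le_mul_of_nonneg_right hpq (norm_nonneg _)
    nlinarith [h2, h3]
  have hlo : -(‖h‖ ^ 2 / (2 * ε)) ≤ (moreau ε f (x + h)).toReal - (moreau ε f x).toReal
      - (inner ℝ (x - P x) h : ℝ) / ε := by
    have h1 := h_le x (x + h)
    have h2 := hA (x + h)
    rw [n2, hiq] at h2
    have e4 : (‖x - P (x + h)‖ ^ 2 + 2 * ((inner ℝ (x - P x) h : ℝ)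
          + (inner ℝ (P x - P (x + h)) h : ℝ)) + ‖h‖ ^ 2) / (2 * ε)
        = ‖x - P (x + h)‖ ^ 2 / (2 * ε) + (inner ℝ (x - P x) h : ℝ) / ε
          + (inner ℝ (P x - P (x + h)) h : ℝ) / ε + ‖h‖ ^ 2 / (2 * ε) := by
      field_simp; ring
    rw [e4] at h2
    have h5 : -(‖h‖ ^ 2) / ε ≤ (inner ℝ (P x - P (x + h)) h : ℝ) / ε := by gcongr
    have h6 : -(‖h‖ ^ 2 / (2 * ε)) = -(‖h‖ ^ 2) / ε + ‖h‖ ^ 2 / (2 * ε) := by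
      field_simp; ring
    rw [h6]
    linarith
  -- conclude
  have hq2 : ‖h‖ ^ 2 / (2 * ε) ≤ cpos * ‖h‖ / 2 := by
    have h1 : ‖h‖ ^ 2 ≤ (ε * cpos) * ‖h‖ := by nlinarith [norm_nonneg h]
    calc ‖h‖ ^ 2 / (2 * ε) ≤ (ε * cpos) * ‖h‖ / (2 * ε) := by gcongr
      _ = cpos * ‖h‖ / 2 := by field_simp
  have hcn : 0 ≤ cpos * ‖h‖ := by positivity
  rw [Real.norm_eq_abs]
  simp only [innerSL_apply_apply, hip]
  rw [abs_le]
  constructor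
  · linarith [hlo]
  · linarith [hup]
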